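/- arXiv:gr-qc/0504119 — 3 statements merged into one kernel-verified Lean document; each statement's English description precedes it below -/
import Mathlib

section
/- Let R be a commutative ring and let f be an element of the algebra of generalized finite formal Laurent series R⟪X⟫ (functions ℝ → R with discrete bounded-below support, Cauchy product). If supp f ⊆ [0, ∞) and f(0) is a unit in R, then f has a multiplicative inverse in R⟪X⟫, and its inverse g satisfies supp g ⊆ [0, ∞) with g(0) = f(0)⁻¹. -/
/-- A subset of ℝ is discrete iff it has no limit (accumulation) points in ℝ. -/
def DiscreteSubset (A : Set ℝ) : Prop := ∀ x : ℝ, ¬ AccPt x (Filter.principal A)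

/-- Membership in the algebra R⟪X⟫: discrete support bounded from below. -/
def DBBSupp {R : Type*} [CommRing R] (f : ℝ → R) : Prop :=
  DiscreteSubset (Function.support f) ∧ BddBelow (Function.support f)

/-- The Cauchy product (f·g)(m) = Σ_{p+q=m} f(p)g(q). -/
noncomputable def cauchy {R : Type*} [CommRing R] (f g : ℝ → R) : ℝ → R :=
  fun m => ∑ᶠ p : ℝ, f p * g (m - p)

open Classical in
/-- The identity X⁰ of R⟪X⟫: value 1 at 0 and 0 elsewhere. -/
noncomputable def oneX {R : Type*} [CommRing R] : ℝ → R :=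
  fun m => if m = 0 then 1 else 0

open Function Set Filter

-- Lemma A
lemma discrete_inter_Icc_finite {A : Set ℝ} (hA : DiscreteSubset A) (a b : ℝ) :
    (A ∩ Set.Icc a b).Finite := by
  by_contra h
  have hinf : (A ∩ Set.Icc a b).Infinite := h
  obtain ⟨x, -, hx⟩ := hinf.exists_accPt_of_subset_isCompact isCompact_Icc Set.inter_subset_right
  exact hA x (hx.mono (Filter.principal_mono.2 Set.inter_subset_left))

-- Lemma B
lemma discrete_of_locally_finite {A : Set ℝ}
    (h : ∀ x : ℝ, (A ∩ Set.Icc (x - 1) (x + 1)).Finite) : DiscreteSubset A := by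
  intro x hacc
  have hU : Set.Icc (x - 1) (x + 1) ∈ nhds x :=
    Icc_mem_nhds (by linarith) (by linarith)
  have h2 : AccPt x (Filter.principal (Set.Icc (x - 1) (x + 1) ∩ A)) := hacc.nhds_inter hU
  rw [accPt_principal_iff_clusterPt] at h2
  have h3 : x ∈ closure ((Set.Icc (x - 1) (x + 1) ∩ A) \ {x}) :=
    mem_closure_iff_clusterPt.2 h2
  have hfin : ((Set.Icc (x - 1) (x + 1) ∩ A) \ {x}).Finite :=
    Set.Finite.diff ((h x).subset (fun y hy => ⟨hy.2, hy.1⟩))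
  rw [hfin.isClosed.closure_eq] at h3
  exact h3.2 rfl

section Gfuel
variable {R : Type*} [CommRing R]

open Classical in
noncomputable def gfuel (v : R) (f' : ℝ → R) : ℕ → ℝ → R
  | 0 => fun x => if x = 0 then v else 0
  | (n+1) => fun x =>
      if x = 0 then v
      else if 0 < x then -(v * ∑ᶠ p : ℝ, f' p * gfuel v f' n (x - p))
      else 0

variable {v : R} {f' : ℝ → R} {δ : ℝ}

lemma gfuel_zero (n : ℕ) : gfuel v f' n 0 = v := by cases n <;> simp [gfuel]

lemma gfuel_neg {x : ℝ} (hx : x < 0) (n : ℕ) : gfuel v f' n x = 0 := by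
  cases n <;> simp [gfuel, hx.ne, not_lt_of_gt hx]

variable (hδ : 0 < δ) (hδf : ∀ p, f' p ≠ 0 → δ ≤ p)
include hδ hδf

lemma gfuel_stab : ∀ n : ℕ, ∀ x : ℝ, x / δ ≤ n → gfuel v f' (n+1) x = gfuel v f' n x := by
  intro n
  induction n with
  | zero =>
    intro x hx
    have hx0 : x ≤ 0 := by
      have := (div_nonpos_iff.mp (by simpa using hx))
      rcases this with ⟨h1, h2⟩ | ⟨h1, h2⟩
      · linarith
      · exact h1
    rcases eq_or_lt_of_le hx0 with h | h
    · rw [h]; simp [gfuel_zero]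
    · rw [gfuel_neg h, gfuel_neg h]
  | succ n ih =>
    intro x hx
    rcases lt_trichotomy x 0 with h | h | h
    · rw [gfuel_neg h, gfuel_neg h]
    · rw [h]; simp [gfuel_zero]
    · show gfuel v f' (n+1+1) x = gfuel v f' (n+1) x
      rw [show gfuel v f' (n+1+1) x
          = -(v * ∑ᶠ p : ℝ, f' p * gfuel v f' (n+1) (x - p)) by
        simp [gfuel, h.ne', h],
        show gfuel v f' (n+1) x
          = -(v * ∑ᶠ p : ℝ, f' p * gfuel v f' n (x - p)) by
        simp [gfuel, h.ne', h]]
      congr 2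
      apply finsum_congr
      intro p
      by_cases hp : f' p = 0
      · simp [hp]
      · rw [ih (x - p) (by
          have h1 : δ ≤ p := hδf p hp
          have h2 : x / δ ≤ (n : ℝ) + 1 := by push_cast at hx ⊢; linarith
          rw [div_le_iff₀ hδ] at h2 ⊢
          push_cast
          linarith)]

lemma gfuel_stab' : ∀ k n : ℕ, ∀ x : ℝ, x / δ ≤ n → gfuel v f' (n + k) x = gfuel v f' n x := by
  intro k
  induction k with
  | zero => intro n x _; rfl
  | succ k ih =>
    intro n x hx
    rw [show n + (k+1) = (n+k) + 1 by ring]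
    rw [gfuel_stab hδ hδf (n+k) x (le_trans hx (by push_cast; linarith)), ih n x hx]

end Gfuel

section GAux
variable {R : Type*} [CommRing R] {v : R} {f' : ℝ → R} {δ : ℝ}

noncomputable def gAux (v : R) (f' : ℝ → R) (δ : ℝ) : ℝ → R :=
  fun x => gfuel v f' ⌈x / δ⌉₊ x

variable (hδ : 0 < δ) (hδf : ∀ p, f' p ≠ 0 → δ ≤ p)
include hδ hδf

lemma gAux_eq (n : ℕ) (x : ℝ) (hx : x / δ ≤ n) : gAux v f' δ x = gfuel v f' n x := by
  have hle : ⌈x / δ⌉₊ ≤ n := Nat.ceil_le.2 hx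
  obtain ⟨k, rfl⟩ := Nat.exists_eq_add_of_le hle
  exact (gfuel_stab' hδ hδf k ⌈x / δ⌉₊ x (Nat.le_ceil _)).symm

omit hδ hδf in
lemma gAux_zero : gAux v f' δ 0 = v := gfuel_zero _

omit hδ hδf in
lemma gAux_neg {x : ℝ} (hx : x < 0) : gAux v f' δ x = 0 := gfuel_neg hx _

lemma gAux_pos {x : ℝ} (hx : 0 < x) :
    gAux v f' δ x = -(v * ∑ᶠ p : ℝ, f' p * gAux v f' δ (x - p)) := by
  have hc : 0 < ⌈x / δ⌉₊ := Nat.ceil_pos.2 (div_pos hx hδ)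
  obtain ⟨m, hm⟩ : ∃ m, ⌈x / δ⌉₊ = m + 1 := ⟨⌈x / δ⌉₊ - 1, by omega⟩
  have hxm : x / δ ≤ (m : ℝ) + 1 := by
    have := Nat.le_ceil (x / δ); rw [hm] at this; push_cast at this; exact this
  rw [show gAux v f' δ x = gfuel v f' (m + 1) x from by rw [gAux, hm]]
  rw [show gfuel v f' (m+1) x = -(v * ∑ᶠ p : ℝ, f' p * gfuel v f' m (x - p)) by
    simp [gfuel, hx.ne', hx]]
  congr 2
  apply finsum_congr
  intro p
  by_cases hp : f' p = 0
  · simp [hp]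
  · rw [gAux_eq hδ hδf m (x - p) (by
      have h1 : δ ≤ p := hδf p hp
      rw [div_le_iff₀ hδ] at hxm ⊢
      linarith)]

omit hδ hδf in
lemma gAux_support (hδ' : 0 ≤ δ) : Function.support (gAux v f' δ) ⊆ Set.Ici 0 := by
  intro x hx
  by_contra h
  exact hx (gAux_neg (lt_of_not_ge (by simpa using h)))

variable (hfin : ∀ b : ℝ, (Function.support f' ∩ Set.Icc 0 b).Finite)
include hfin

lemma gAux_term_support (x : ℝ) :
    Function.support (fun p => f' p * gAux v f' δ (x - p)) ⊆
      Function.support f' ∩ Set.Icc 0 x := by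
  intro p hp
  have h1 : f' p ≠ 0 := fun h => hp (by simp [h])
  have h2 : gAux v f' δ (x - p) ≠ 0 := fun h => hp (by simp [h])
  have h3 : δ ≤ p := hδf p h1
  have h4 : 0 ≤ x - p := le_of_not_gt fun hc => h2 (gAux_neg hc)
  exact ⟨h1, ⟨by linarith, by linarith⟩⟩

lemma gAux_fin_supp : ∀ n : ℕ, ∀ b : ℝ, b / δ ≤ n →
    (Function.support (gAux v f' δ) ∩ Set.Icc 0 b).Finite := by
  intro n
  induction n with
  | zero =>
    intro b hb
    have hb0 : b ≤ 0 := by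
      rcases div_nonpos_iff.mp (by simpa using hb) with ⟨h1, h2⟩ | ⟨h1, h2⟩
      · linarith
      · exact h1
    apply Set.Finite.subset (Set.finite_singleton (0 : ℝ))
    rintro x ⟨-, hx0, hxb⟩
    simp [le_antisymm (hxb.trans hb0) hx0]
  | succ n ih =>
    intro b hb
    have hK : (Function.support (gAux v f' δ) ∩ Set.Icc 0 (b - δ)).Finite := by
      apply ih
      rw [div_le_iff₀ hδ] at hb ⊢
      push_cast at hb ⊢
      linarith
    have hT : (Function.support f' ∩ Set.Icc 0 b).Finite := hfin b
    apply Set.Finite.subset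
      ((Set.finite_singleton (0:ℝ)).union
        (hT.biUnion (fun p _ => hK.image (fun y => p + y))))
    rintro x ⟨hxg, hx0, hxb⟩
    rcases eq_or_lt_of_le hx0 with h | h
    · exact Or.inl (by simp [← h])
    · right
      have hrec := gAux_pos (v := v) hδ hδf h
      have hsum : (∑ᶠ p : ℝ, f' p * gAux v f' δ (x - p)) ≠ 0 := by
        intro hc
        exact hxg (by rw [hrec, hc, mul_zero, neg_zero])
      obtain ⟨p, hp⟩ : ∃ p, f' p * gAux v f' δ (x - p) ≠ 0 := by
        by_contra hc
        push_neg at hc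
        exact hsum (finsum_eq_zero_of_forall_eq_zero hc)
      have h1 : f' p ≠ 0 := fun h => hp (by simp [h])
      have h2 : gAux v f' δ (x - p) ≠ 0 := fun h => hp (by simp [h])
      have h3 : δ ≤ p := hδf p h1
      have h4 : 0 ≤ x - p := le_of_not_gt fun hc => h2 (gAux_neg hc)
      refine Set.mem_biUnion (show p ∈ _ ∩ Set.Icc 0 b from ⟨h1, by constructor <;> linarith⟩) ?_
      exact ⟨x - p, ⟨h2, h4, by linarith⟩, by ring⟩

lemma gAux_discrete : DiscreteSubset (Function.support (gAux v f' δ)) := by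
  apply discrete_of_locally_finite
  intro x
  apply Set.Finite.subset (gAux_fin_supp (v := v) hδ hδf hfin ⌈(x+1)/δ⌉₊ (x+1) (Nat.le_ceil _))
  rintro y ⟨hy1, hy2, hy3⟩
  have h0 : 0 ≤ y := gAux_support hδ.le hy1
  exact ⟨hy1, h0, by linarith⟩

end GAux

/-- an element of R⟪X⟫ supported in [0,∞) whose coefficient at 0 is a
unit has a multiplicative inverse in R⟪X⟫, supported in [0,∞), whose coefficient at 0
is the inverse of f(0). -/
theorem laurent_inverse_order_zero {R : Type*} [CommRing R] (f : ℝ → R)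
    (hf : DBBSupp f) (hsupp : Function.support f ⊆ Set.Ici (0 : ℝ))
    (hunit : IsUnit (f 0)) :
    ∃ g : ℝ → R, DBBSupp g ∧ Function.support g ⊆ Set.Ici (0 : ℝ) ∧
      cauchy f g = oneX ∧ cauchy g f = oneX ∧ f 0 * g 0 = 1 := by
  classical
  obtain ⟨hfd, hfb⟩ := hf
  obtain ⟨u, hu⟩ := hunit
  set v : R := ↑u⁻¹ with hv
  have huv : f 0 * v = 1 := by rw [← hu]; exact u.mul_inv
  set f' : ℝ → R := fun p => if p = 0 then 0 else f p with hf'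
  have hf'f : ∀ p, f' p ≠ 0 → f p ≠ 0 := by
    intro p hp h
    apply hp
    by_cases h0 : p = 0 <;> simp [hf', h0, h]
  have hf'supp : ∀ p, f' p ≠ 0 → 0 < p := by
    intro p hp
    have hne : p ≠ 0 := by intro h; exact hp (by simp [hf', h])
    exact lt_of_le_of_ne (hsupp (hf'f p hp)) (Ne.symm hne)
  have hfin : ∀ b : ℝ, (Function.support f' ∩ Set.Icc 0 b).Finite := by
    intro b
    apply (discrete_inter_Icc_finite hfd 0 b).subset
    rintro p ⟨hp, hpb⟩
    exact ⟨hf'f p hp, hpb⟩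
  set T := Function.support f' ∩ Set.Icc 0 1 with hT
  have hTfin : T.Finite := hfin 1
  set δ : ℝ := if h : T.Nonempty then sInf T else 1 with hδdef
  have hδ : 0 < δ ∧ ∀ p, f' p ≠ 0 → δ ≤ p := by
    by_cases h : T.Nonempty
    · rw [hδdef, dif_pos h]
      have hmem : sInf T ∈ T := Set.Nonempty.csInf_mem h hTfin
      refine ⟨hf'supp _ hmem.1, fun p hp => ?_⟩
      by_cases hp1 : p ≤ 1
      · exact csInf_le hTfin.bddBelow ⟨hp, (hf'supp p hp).le, hp1⟩
      · exact hmem.2.2.trans (le_of_not_ge hp1)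
    · rw [hδdef, dif_neg h]
      refine ⟨one_pos, fun p hp => ?_⟩
      by_contra hc
      exact h ⟨p, hp, (hf'supp p hp).le, by linarith⟩
  set g : ℝ → R := gAux v f' δ with hg
  have hgsupp : Function.support g ⊆ Set.Ici 0 := gAux_support hδ.1.le
  have hg0 : g 0 = v := gAux_zero
  have hfsplit : ∀ p : ℝ, f p = (if p = 0 then f 0 else 0) + f' p := by
    intro p; by_cases h : p = 0 <;> simp [hf', h]
  have hcau : ∀ m : ℝ, cauchy f g m = f 0 * g m + ∑ᶠ p : ℝ, f' p * g (m - p) := by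
    intro m
    show (∑ᶠ p : ℝ, f p * g (m - p)) = _
    rw [finsum_congr (fun p => by rw [hfsplit p, add_mul])]
    rw [finsum_add_distrib
      (Set.Finite.subset (Set.finite_singleton (0:ℝ)) (fun p hp => by
        simp only [Set.mem_singleton_iff]
        by_contra hc'
        exact hp (by simp [hc'])))
      ((hfin m).subset (gAux_term_support hδ.1 hδ.2 hfin m))]
    congr 1
    rw [finsum_eq_single _ 0 (fun p hp => by simp [if_neg hp])]
    simp
  have hcfg : cauchy f g = oneX := by
    funext m
    rw [hcau m, show oneX m = if m = (0:ℝ) then (1:R) else 0 from rfl]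
    rcases lt_trichotomy m 0 with h | h | h
    · rw [if_neg h.ne]
      rw [show g m = 0 from gAux_neg h, mul_zero, zero_add]
      apply finsum_eq_zero_of_forall_eq_zero
      intro p
      by_cases hp : f' p = 0
      · simp [hp]
      · rw [show g (m - p) = 0 from
          gAux_neg (by have := hδ.2 p hp; have := hδ.1; linarith), mul_zero]
    · rw [if_pos h, h, hg0]
      have hsum : (∑ᶠ p : ℝ, f' p * g (0 - p)) = 0 := by
        apply finsum_eq_zero_of_forall_eq_zero
        intro p
        by_cases hp : f' p = 0
        · simp [hp]
        · rw [show g (0 - p) = 0 from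
            gAux_neg (by have := hδ.2 p hp; have := hδ.1; linarith), mul_zero]
      rw [hsum, add_zero, huv]
    · rw [if_neg h.ne']
      rw [show g m = -(v * ∑ᶠ p : ℝ, f' p * g (m - p)) from gAux_pos hδ.1 hδ.2 h]
      rw [mul_neg, ← mul_assoc, huv, one_mul, neg_add_cancel]
  have hcgf : cauchy g f = cauchy f g := by
    funext m
    show (∑ᶠ p : ℝ, g p * f (m - p)) = ∑ᶠ p : ℝ, f p * g (m - p)
    rw [← finsum_comp (g := fun q : ℝ => f q * g (m - q)) (fun p : ℝ => m - p)
      ((Function.involutive_iff_iter_2_eq_id.mpr (by funext x; simp)).bijective)]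
    apply finsum_congr
    intro p
    rw [sub_sub_cancel]
    ring
  refine ⟨g, ?_, hgsupp, hcfg, by rw [hcgf]; exact hcfg, by rw [hg0]; exact huv⟩
  show DiscreteSubset (Function.support g) ∧ BddBelow (Function.support g)
  exact ⟨gAux_discrete hδ.1 hδ.2 hfin, ⟨0, fun x hx => hgsupp hx⟩⟩
end

section
/- Let R be a commutative ring, R⟪X⟫ the algebra of generalized finite formal Laurent series over R, and f ∈ R⟪X⟫ with minimal support element α such that f(α) is a unit. Then f is invertible in R⟪X⟫ with inverse supported in [-α, ∞). -/
noncomputable section LaurentAux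

open Finset Function Pointwise HahnSeries HahnSeries.SummableFamily

/-! ### Powers machinery without `IsDomain` -/

variable {Γ R : Type*} [AddCommMonoid Γ] [LinearOrder Γ] [IsOrderedCancelAddMonoid Γ] [CommRing R]

theorem myPow_support_subset (x : HahnSeries Γ R) :
    (⋃ n : ℕ, (x ^ n).support) ⊆ AddSubmonoid.closure (x.support) := by
  refine Set.iUnion_subset fun n => ?_
  induction' n with n ih <;> intro g hn
  · rw [pow_zero] at hn
    have hg : g = 0 := by
      by_contra h
      simp [HahnSeries.coeff_one, h,
        Function.mem_support (f := (1 : HahnSeries Γ R).coeff)] at hn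
    rw [hg, SetLike.mem_coe]
    exact AddSubmonoid.zero_mem _
  · obtain ⟨i, hi, j, hj, rfl⟩ := support_mul_subset hn
    exact SetLike.mem_coe.2 (AddSubmonoid.add_mem _ (ih hi) (AddSubmonoid.subset_closure hj))

theorem myIsPWO {x : HahnSeries Γ R} (hx : 0 < x.orderTop) :
    (⋃ n : ℕ, (x ^ n).support).IsPWO := by
  apply (x.isWF_support.isPWO.addSubmonoid_closure _).mono (myPow_support_subset x)
  exact fun g hg => WithTop.coe_le_coe.1
      (le_trans (le_of_lt hx) (orderTop_le_of_coeff_ne_zero hg))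

def myPowers (x : HahnSeries Γ R) (hx : 0 < x.orderTop) : SummableFamily Γ R ℕ where
  toFun n := x ^ n
  isPWO_iUnion_support' := myIsPWO hx
  finite_co_support' g := by
    have hpwo := myIsPWO hx
    by_cases hg : g ∈ ⋃ n : ℕ, { g | (x ^ n).coeff g ≠ 0 }
    swap; · exact Set.finite_empty.subset fun n hn => hg (Set.mem_iUnion.2 ⟨n, hn⟩)
    apply hpwo.isWF.induction hg
    intro y ys hy
    refine
      ((((addAntidiagonal x.isPWO_support hpwo y).finite_toSet.biUnion fun ij hij =>
                    hy ij.snd ?_ ?_).image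
                Nat.succ).union
            (Set.finite_singleton 0)).subset
        ?_
    · exact (mem_addAntidiagonal.1 (mem_coe.1 hij)).2.1
    · obtain ⟨hi, _, rfl⟩ := mem_addAntidiagonal.1 (mem_coe.1 hij)
      rw [← zero_add ij.snd, ← add_assoc, add_zero]
      exact
        add_lt_add_of_lt_of_le (WithTop.coe_lt_coe.1 (hx.trans_le (orderTop_le_of_coeff_ne_zero hi)))
          le_rfl
    · rintro (_ | n) hn
      · exact Set.mem_union_right _ (Set.mem_singleton 0)
      · obtain ⟨i, hi, j, hj, rfl⟩ := support_mul_subset hn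
        refine Set.mem_union_left _ ⟨n, Set.mem_iUnion.2 ⟨⟨j, i⟩, Set.mem_iUnion.2 ⟨?_, hi⟩⟩, rfl⟩
        simp only [Set.mem_iUnion, mem_addAntidiagonal, mem_coe, eq_self_iff_true, Ne,
          HahnSeries.mem_support, Set.mem_setOf_eq]
        exact (mem_addAntidiagonal.2 ⟨hj, Set.mem_iUnion.2 ⟨n, hi⟩, add_comm j i⟩ :
          (j, i) ∈ addAntidiagonal x.isPWO_support hpwo (i + j))

@[simp]
theorem coe_myPowers (x : HahnSeries Γ R) (hx : 0 < x.orderTop) : ⇑(myPowers x hx) = HPow.hPow x :=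
  rfl

theorem myPowers_toFun (x : HahnSeries Γ R) (hx : 0 < x.orderTop) (n : ℕ) :
    myPowers x hx n = x ^ n := rfl

theorem my_embDomain_succ_smul_powers {x : HahnSeries Γ R} (hx : 0 < x.orderTop) :
    (x • myPowers x hx).embDomain ⟨Nat.succ, Nat.succ_injective⟩ =
      myPowers x hx - SummableFamily.ofFinsupp (Finsupp.single 0 1) := by
  apply SummableFamily.ext
  rintro (_ | n)
  · rw [SummableFamily.embDomain_notin_range, SummableFamily.sub_apply, coe_myPowers, pow_zero, coe_ofFinsupp,
      Finsupp.single_eq_same, sub_self]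
    rw [Set.mem_range, not_exists]
    exact Nat.succ_ne_zero
  · refine Eq.trans (embDomain_image _ ⟨Nat.succ, Nat.succ_injective⟩) ?_
    rw [SummableFamily.smul_apply, myPowers_toFun, SummableFamily.coe_sub, coe_myPowers, Pi.sub_apply,
      coe_ofFinsupp, pow_succ', Finsupp.single_eq_of_ne (Nat.succ_ne_zero n), sub_zero,
      HahnSeries.of_symm_smul_of_eq_mul]

theorem my_one_sub_self_mul_hsum_powers {x : HahnSeries Γ R} (hx : 0 < x.orderTop) :
    (1 - x) * (myPowers x hx).hsum = 1 := by
  rw [← hsum_smul, sub_smul 1 x (myPowers x hx), one_smul, hsum_sub, ←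
    hsum_embDomain (x • myPowers x hx) ⟨Nat.succ, Nat.succ_injective⟩,
    my_embDomain_succ_smul_powers]
  simp

/-! ### Locally finite subsets of ℝ -/

def LocFin (s : Set ℝ) : Prop := ∀ T : ℝ, (s ∩ Set.Iic T).Finite

theorem locFin_of_discrete_bdd {s : Set ℝ} (hd : DiscreteSubset s) (hb : BddBelow s) :
    LocFin s := by
  intro T
  by_contra hinf
  obtain ⟨b, hbd⟩ := hb
  have hsub : s ∩ Set.Iic T ⊆ Set.Icc b T := fun x hx => ⟨hbd hx.1, hx.2⟩
  obtain ⟨x, -, hx⟩ := Set.Infinite.exists_accPt_of_subset_isCompact hinf isCompact_Icc hsub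
  exact hd x (hx.mono (Filter.principal_mono.2 Set.inter_subset_left))

theorem discrete_of_locFin {s : Set ℝ} (h : LocFin s) : DiscreteSubset s := by
  intro x hx
  rw [accPt_iff_nhds] at hx
  set F : Set ℝ := (s ∩ Set.Iic (x + 1)) \ {x} with hF
  have hFfin : F.Finite := (h (x + 1)).diff (t := {x})
  have hFc : IsClosed F := hFfin.isClosed
  have hxF : x ∉ F := fun h' => h'.2 rfl
  have hU : (Set.Iio (x + 1) ∩ Fᶜ) ∈ nhds x := by
    apply Filter.inter_mem
    · exact Iio_mem_nhds (by linarith)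
    · exact hFc.isOpen_compl.mem_nhds hxF
  obtain ⟨y, ⟨⟨hy1, hy2⟩, hys⟩, hyx⟩ := hx _ hU
  exact hy2 ⟨⟨hys, Set.mem_Iic.mpr (le_of_lt (Set.mem_Iio.mp hy1))⟩, hyx⟩

theorem bddBelow_of_locFin {s : Set ℝ} (h : LocFin s) : BddBelow s := by
  have h1 : BddBelow (s ∩ Set.Iic 0) := (h 0).bddBelow
  have h2 : BddBelow (s ∩ Set.Ioi 0) := ⟨0, fun x hx => le_of_lt hx.2⟩
  have : s = (s ∩ Set.Iic 0) ∪ (s ∩ Set.Ioi 0) := by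
    rw [← Set.inter_union_distrib_left, Set.Iic_union_Ioi, Set.inter_univ]
  rw [this]
  exact h1.union h2

theorem isWF_of_locFin {s : Set ℝ} (h : LocFin s) : s.IsWF := by
  rw [Set.isWF_iff_no_descending_seq]
  intro g hg hmem
  have hinf : (s ∩ Set.Iic (g 0)).Infinite :=
    Set.infinite_of_injective_forall_mem (f := g) hg.injective
      (fun n => ⟨hmem n, hg.antitone (Nat.zero_le n)⟩)
  exact hinf (h (g 0))

theorem exists_multiset_of_mem_closure {D : Set ℝ} {x : ℝ}
    (hx : x ∈ AddSubmonoid.closure D) :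
    ∃ m : Multiset ℝ, (∀ y ∈ m, y ∈ D) ∧ m.sum = x := by
  induction hx using AddSubmonoid.closure_induction with
  | mem z hz => exact ⟨({z} : Multiset ℝ), by simpa using hz, by simp⟩
  | zero => exact ⟨(0 : Multiset ℝ), by simp, rfl⟩
  | add a b _ _ iha ihb =>
    obtain ⟨m1, hm1, hs1⟩ := iha
    obtain ⟨m2, hm2, hs2⟩ := ihb
    refine ⟨m1 + m2, fun y hy => ?_, by simp [hs1, hs2]⟩
    rcases Multiset.mem_add.1 hy with h | h
    · exact hm1 y h
    · exact hm2 y h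

theorem closure_nonneg {D : Set ℝ} (hD : D ⊆ Set.Ioi 0) :
    (AddSubmonoid.closure D : Set ℝ) ⊆ Set.Ici 0 := by
  intro x hx
  obtain ⟨m, hm, rfl⟩ := exists_multiset_of_mem_closure hx
  exact Multiset.sum_nonneg fun y hy => le_of_lt (hD (hm y hy))

theorem locFin_closure {D : Set ℝ} (hD : D ⊆ Set.Ioi 0) (hLF : LocFin D) :
    LocFin (AddSubmonoid.closure D : Set ℝ) := by
  rcases D.eq_empty_or_nonempty with rfl | ⟨d, hd⟩
  · intro T
    apply Set.Finite.inter_of_left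
    simp only [AddSubmonoid.closure_empty]
    exact (Set.finite_singleton 0).subset (by simp [AddSubmonoid.coe_bot])
  obtain ⟨δ, hδpos, hδle⟩ : ∃ δ : ℝ, 0 < δ ∧ ∀ y ∈ D, δ ≤ y := by
    have hfin : (D ∩ Set.Iic d).Finite := hLF d
    have hne : (D ∩ Set.Iic d).Nonempty := ⟨d, hd, le_refl d⟩
    obtain ⟨δ, hδmem, hδmin⟩ := Set.exists_min_image _ id hfin hne
    refine ⟨δ, hD hδmem.1, fun y hy => ?_⟩
    by_cases hyd : y ≤ d
    · exact hδmin y ⟨hy, hyd⟩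
    · push_neg at hyd
      calc δ ≤ d := hδmem.2
        _ ≤ y := le_of_lt hyd
  intro T
  set E : Finset ℝ := (hLF T).toFinset with hE
  set N : ℕ := ⌈T / δ⌉₊ with hN
  have key : (AddSubmonoid.closure D : Set ℝ) ∩ Set.Iic T ⊆
      Multiset.sum '' {m : Multiset ℝ | m ∈ (N • E.val).powerset} := by
    rintro x ⟨hx, hxT⟩
    obtain ⟨m, hm, rfl⟩ := exists_multiset_of_mem_closure hx
    have hmemE : ∀ y ∈ m, y ∈ E := by
      intro y hy
      have hysum : y ≤ m.sum := Multiset.single_le_sum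
        (fun z hz => le_of_lt (hD (hm z hz))) y hy
      simp only [hE, Set.Finite.mem_toFinset]
      exact ⟨hm y hy, le_trans hysum hxT⟩
    have hcard : Multiset.card m ≤ N := by
      have h1 : (Multiset.card m : ℝ) * δ ≤ m.sum := by
        calc (Multiset.card m : ℝ) * δ = Multiset.card m • δ := by rw [nsmul_eq_mul]
          _ ≤ m.sum := Multiset.card_nsmul_le_sum (fun y hy => hδle y (hm y hy))
      have h2 : (Multiset.card m : ℝ) ≤ T / δ := by
        rw [le_div_iff₀ hδpos]; exact le_trans h1 hxT
      have h3 := le_trans h2 (Nat.le_ceil (T / δ))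
      exact_mod_cast h3
    refine ⟨m, ?_, rfl⟩
    rw [Set.mem_setOf_eq, Multiset.mem_powerset, Multiset.le_iff_count]
    intro a
    by_cases ha : a ∈ m
    · rw [Multiset.count_nsmul]
      have h1 : Multiset.count a E.val = 1 :=
        Multiset.count_eq_one_of_mem E.nodup (hmemE a ha)
      rw [h1, mul_one]
      exact le_trans (Multiset.count_le_card a m) hcard
    · rw [Multiset.count_eq_zero_of_notMem ha]
      exact Nat.zero_le _
  exact Set.Finite.subset (Set.Finite.image _ (Multiset.finite_toSet _)) key

/-! ### Cauchy product versus Hahn series multiplication -/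

theorem cauchy_eq_mul_coeff {R : Type*} [CommRing R] (A B : HahnSeries ℝ R) :
    cauchy A.coeff B.coeff = (A * B).coeff := by
  funext m
  rw [HahnSeries.coeff_mul]
  set s := Finset.addAntidiagonal A.isPWO_support B.isPWO_support m with hs
  have hmem : ∀ x : ℝ × ℝ, x ∈ s ↔ x.1 ∈ A.support ∧ x.2 ∈ B.support ∧ x.1 + x.2 = m :=
    fun x => Finset.mem_addAntidiagonal
  have hsum : cauchy A.coeff B.coeff m = ∑ p ∈ s.image Prod.fst, A.coeff p * B.coeff (m - p) := by
    apply finsum_eq_finset_sum_of_support_subset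
    intro p hp
    have hA : A.coeff p ≠ 0 := fun h => hp (by simp [h])
    have hB : B.coeff (m - p) ≠ 0 := fun h => hp (by simp [h])
    simp only [Finset.coe_image, Set.mem_image, Finset.mem_coe]
    exact ⟨(p, m - p), (hmem _).2 ⟨hA, hB, by ring⟩, rfl⟩
  rw [hsum, Finset.sum_image ?inj]
  case inj =>
    intro x hx y hy hxy
    rw [Finset.mem_coe, hmem] at hx hy
    have h2 : x.2 = y.2 := by
      have h1 := hx.2.2
      have h2 := hy.2.2
      rw [hxy] at h1
      linarith
    exact Prod.ext hxy h2
  apply Finset.sum_congr rfl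
  intro x hx
  rw [hmem] at hx
  congr 1
  rw [← hx.2.2]; ring_nf

end LaurentAux

/-- an element f of R⟪X⟫ whose minimal support element α carries a unit
coefficient is invertible in R⟪X⟫, with inverse supported in [-α, ∞). -/
theorem laurent_inverse_general {R : Type*} [CommRing R] (f : ℝ → R) (α : ℝ)
    (hf : DBBSupp f) (hmin : IsLeast (Function.support f) α)
    (hunit : IsUnit (f α)) :
    ∃ g : ℝ → R, DBBSupp g ∧ Function.support g ⊆ Set.Ici (-α) ∧
      cauchy f g = oneX ∧ cauchy g f = oneX := by
  classical
  set r : R := ↑hunit.unit⁻¹ with hr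
  have hrf : r * f α = 1 := hunit.val_inv_mul
  have hLFf : LocFin (Function.support f) := locFin_of_discrete_bdd hf.1 hf.2
  set F : HahnSeries ℝ R := ⟨f, (isWF_of_locFin hLFf).isPWO⟩ with hFdef
  have hFc : F.coeff = f := rfl
  -- the series y = 1 - X^{-α} r f
  set y : HahnSeries ℝ R := 1 - HahnSeries.single (-α) r * F with hydef
  have hsingle : ∀ g : ℝ, (HahnSeries.single (-α) r * F).coeff g = r * f (g + α) := by
    intro g
    conv_lhs => rw [show g = (g + α) + (-α) by ring]
    rw [HahnSeries.coeff_single_mul_add, hFc]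
  have hflt : ∀ g : ℝ, g < α → f g = 0 := by
    intro g hg
    by_contra h
    exact absurd (hmin.2 h) (not_le.2 hg)
  have hycoeff : ∀ g : ℝ, g ≤ 0 → y.coeff g = 0 := by
    intro g hg
    rw [hydef, HahnSeries.coeff_sub, HahnSeries.coeff_one, hsingle]
    rcases eq_or_lt_of_le hg with rfl | hlt
    · simp [hrf]
    · rw [if_neg (ne_of_lt hlt), hflt (g + α) (by linarith), mul_zero, sub_zero]
  have hy : 0 < y.orderTop := by
    rcases eq_or_ne y 0 with h0 | hne
    · rw [h0, HahnSeries.orderTop_zero]; exact WithTop.top_pos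
    · have horder : 0 < y.order := by
        by_contra h
        push_neg at h
        exact hne (HahnSeries.coeff_order_eq_zero.mp (hycoeff _ h))
      rw [← HahnSeries.order_eq_orderTop_of_ne_zero hne]
      exact_mod_cast horder
  set G : HahnSeries ℝ R := HahnSeries.single (-α) r * (myPowers y hy).hsum with hGdef
  have hFG : F * G = 1 := by
    have h1 : (1 - y) * (myPowers y hy).hsum = 1 := my_one_sub_self_mul_hsum_powers hy
    have h2 : (1 : HahnSeries ℝ R) - y = HahnSeries.single (-α) r * F := by
      rw [hydef, sub_sub_cancel]
    calc F * G = (HahnSeries.single (-α) r * F) * (myPowers y hy).hsum := by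
          rw [hGdef]; ring
      _ = 1 := by rw [← h2, h1]
  -- support control
  set D : Set ℝ := {x : ℝ | 0 < x ∧ x + α ∈ Function.support f} with hDdef
  have hD_Ioi : D ⊆ Set.Ioi 0 := fun x hx => hx.1
  have hD_LF : LocFin D := by
    intro T
    have hsub : D ∩ Set.Iic T ⊆ (fun x => x - α) '' (Function.support f ∩ Set.Iic (T + α)) := by
      rintro x ⟨⟨-, hx2⟩, hxT⟩
      exact ⟨x + α, ⟨hx2, by simpa using add_le_add_right hxT α⟩, by ring⟩
    exact ((hLFf (T + α)).image _).subset hsub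
  have hsuppy : y.support ⊆ D := by
    intro g hg
    rw [HahnSeries.mem_support] at hg
    have hgpos : 0 < g := by
      by_contra h
      push_neg at h
      exact hg (hycoeff g h)
    refine ⟨hgpos, ?_⟩
    intro hzero
    apply hg
    rw [hydef, HahnSeries.coeff_sub, HahnSeries.coeff_one, if_neg (ne_of_gt hgpos), hsingle,
      hzero, mul_zero, sub_zero]
  have hC_LF : LocFin (AddSubmonoid.closure D : Set ℝ) := locFin_closure hD_Ioi hD_LF
  have hC_nonneg : (AddSubmonoid.closure D : Set ℝ) ⊆ Set.Ici 0 := closure_nonneg hD_Ioi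
  have hsupp_hsum : (myPowers y hy).hsum.support ⊆ (AddSubmonoid.closure D : Set ℝ) := by
    refine le_trans HahnSeries.SummableFamily.support_hsum_subset ?_
    refine le_trans (myPow_support_subset y) ?_
    exact_mod_cast AddSubmonoid.closure_mono hsuppy
  have hGcoeff : ∀ g : ℝ, G.coeff g = r * (myPowers y hy).hsum.coeff (g + α) := by
    intro g
    conv_lhs => rw [hGdef, show g = (g + α) + (-α) by ring]
    rw [HahnSeries.coeff_single_mul_add]
  have hsuppG : Function.support G.coeff ⊆
      (fun x => x - α) '' (AddSubmonoid.closure D : Set ℝ) := by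
    intro g hg
    rw [Function.mem_support, hGcoeff] at hg
    have h1 : (myPowers y hy).hsum.coeff (g + α) ≠ 0 := by
      intro h; rw [h, mul_zero] at hg; exact hg rfl
    exact ⟨g + α, hsupp_hsum h1, by ring⟩
  have hG_LF : LocFin (Function.support G.coeff) := by
    intro T
    refine ((hC_LF (T + α)).image (fun x => x - α)).subset ?_
    rintro g ⟨hg, hgT⟩
    obtain ⟨c, hc, rfl⟩ := hsuppG hg
    exact ⟨c, ⟨hc, by simpa using add_le_add hgT (le_refl α)⟩, rfl⟩
  refine ⟨G.coeff, ⟨discrete_of_locFin hG_LF, bddBelow_of_locFin hG_LF⟩, ?_, ?_, ?_⟩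
  · intro g hg
    obtain ⟨c, hc, rfl⟩ := hsuppG hg
    have := hC_nonneg hc
    simp only [Set.mem_Ici] at this ⊢
    linarith
  · rw [← hFc, cauchy_eq_mul_coeff, hFG]
    funext m
    by_cases h : m = 0 <;> simp [oneX, h]
  · rw [← hFc, cauchy_eq_mul_coeff, mul_comm, hFG]
    funext m
    by_cases h : m = 0 <;> simp [oneX, h]
end

section
/- Let R be a commutative ring, n ≥ 2, and let (g_{ab}) be a symmetric n×n family of elements of R⟪X⟫ each supported in [-v, ∞), such that the matrix ((g_{ab})(-v)) of lowest-order coefficients is invertible over R. Then there exists a unique symmetric family (g^{ab}) of elements of R⟪X⟫ supported in [v, ∞) with g_{ai} g^{ib} = δ_a^b, and its lowest-order coefficients form the inverse matrix of ((g_{ab})(-v)). -/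
open Set Function Filter Pointwise

namespace FMI

/-- A set with finite intersections with all `Iic M` is discrete. -/
lemma discrete_of_finite_bounded {A : Set ℝ} (h : ∀ M : ℝ, (A ∩ Set.Iic M).Finite) :
    DiscreteSubset A := by
  intro x hx
  rw [accPt_iff_nhds] at hx
  have hF : ((A ∩ Set.Iic (x + 1)) \ {x}).Finite := (h (x + 1)).diff
  have hclosed : IsClosed ((A ∩ Set.Iic (x + 1)) \ {x}) := hF.isClosed
  have hxU : ((A ∩ Set.Iic (x + 1)) \ {x})ᶜ ∩ Set.Iio (x + 1) ∈ nhds x := by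
    refine Filter.inter_mem ?_ ?_
    · exact hclosed.isOpen_compl.mem_nhds (by simp)
    · exact Iio_mem_nhds (by linarith)
  obtain ⟨y, ⟨hyU, hyA⟩, hyx⟩ := hx _ hxU
  exact hyU.1 ⟨⟨hyA, Set.mem_Iic.2 (le_of_lt hyU.2)⟩, hyx⟩

lemma finite_bounded_of_discrete {A : Set ℝ} (hA : DiscreteSubset A) (hb : BddBelow A)
    (M : ℝ) : (A ∩ Set.Iic M).Finite := by
  by_contra hinf
  obtain ⟨a, ha⟩ := hb
  have hsub : A ∩ Set.Iic M ⊆ Set.Icc a M := fun y hy => ⟨ha hy.1, hy.2⟩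
  have hinf' : (A ∩ Set.Iic M).Infinite := hinf
  obtain ⟨x, -, hx⟩ := hinf'.exists_accPt_of_subset_isCompact isCompact_Icc hsub
  exact hA x (hx.mono (Filter.principal_mono.2 Set.inter_subset_left))

lemma isPWO_of_discrete {A : Set ℝ} (hA : DiscreteSubset A) (hb : BddBelow A) : A.IsPWO := by
  refine Set.IsWF.isPWO ?_
  rw [Set.isWF_iff_no_descending_seq]
  intro f hf hmem
  have hfin : (A ∩ Set.Iic (f 0)).Finite := finite_bounded_of_discrete hA hb (f 0)
  have hsub : Set.range f ⊆ A ∩ Set.Iic (f 0) := by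
    rintro y ⟨k, rfl⟩
    exact ⟨hmem k, hf.antitone (Nat.zero_le k)⟩
  exact Set.infinite_range_of_injective hf.injective (hfin.subset hsub)

lemma DiscreteSubset.mono {A B : Set ℝ} (h : DiscreteSubset B) (hAB : A ⊆ B) :
    DiscreteSubset A := fun x hx => h x (hx.mono (Filter.principal_mono.2 hAB))





/-- Iterated sumsets with a finite set. -/
private def iterAdd (F : Set ℝ) : ℕ → Set ℝ
  | 0 => {0}
  | (k+1) => iterAdd F k ∪ (F + iterAdd F k)

private lemma iterAdd_finite {F : Set ℝ} (hF : F.Finite) : ∀ k, (iterAdd F k).Finite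
  | 0 => Set.finite_singleton 0
  | (k+1) => ((iterAdd_finite hF k).union (hF.add (iterAdd_finite hF k)))

private lemma iterAdd_mono {F : Set ℝ} : Monotone (iterAdd F) := by
  refine monotone_nat_of_le_succ fun k => ?_
  exact Set.subset_union_left

private lemma sum_mem_iterAdd {F : Set ℝ} :
    ∀ (m : Multiset ℝ), (∀ y ∈ m, y ∈ F) → m.sum ∈ iterAdd F m.card := by
  intro m
  induction m using Multiset.induction with
  | empty => intro _; simp [iterAdd]
  | cons a s ih =>
    intro h
    rw [Multiset.sum_cons, Multiset.card_cons]
    exact Set.mem_union_right _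
      (Set.add_mem_add (h a (Multiset.mem_cons_self a s)) (ih fun y hy => h y (Multiset.mem_cons_of_mem hy)))

lemma closure_finite_bounded {S : Set ℝ} (hS : S ⊆ Set.Ici 0)
    (hfin : ∀ M : ℝ, (S ∩ Set.Iic M).Finite) (M : ℝ) :
    ((AddSubmonoid.closure S : Set ℝ) ∩ Set.Iic M).Finite := by
  classical
  have hF : (S ∩ Set.Ioc 0 M).Finite := (hfin M).subset (fun y hy => ⟨hy.1, hy.2.2⟩)
  -- choose a positive lower bound σ for the positive elements of S that are ≤ M
  obtain ⟨σ, hσ0, hσ⟩ : ∃ σ : ℝ, 0 < σ ∧ ∀ y ∈ S ∩ Set.Ioc 0 M, σ ≤ y := by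
    rcases (S ∩ Set.Ioc 0 M).eq_empty_or_nonempty with he | hne
    · exact ⟨1, one_pos, by simp [he]⟩
    · refine ⟨hF.toFinset.min' (by simpa using hne), ?_, ?_⟩
      · have := hF.toFinset.min'_mem (by simpa using hne)
        rw [Set.Finite.mem_toFinset] at this
        exact this.2.1
      · intro y hy
        exact hF.toFinset.min'_le y (hF.mem_toFinset.2 hy)
  set K : ℕ := ⌈M / σ⌉₊ with hK
  refine (iterAdd_finite hF K).subset ?_
  rintro x ⟨hxC, hxM⟩
  obtain ⟨m, hm, hsum⟩ := AddSubmonoid.exists_multiset_of_mem_closure hxC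
  -- drop the zero entries
  set m' : Multiset ℝ := m.filter (· ≠ 0) with hm'
  have hm'mem : ∀ y ∈ m', y ∈ S ∧ y ≠ 0 := by
    intro y hy
    rw [hm', Multiset.mem_filter] at hy
    exact ⟨hm y hy.1, hy.2⟩
  have hsum' : m'.sum = x := by
    have : m = m' + m.filter (fun y => ¬ y ≠ 0) := (Multiset.filter_add_not _ m).symm
    rw [← hsum, this, Multiset.sum_add]
    have hz : (m.filter (fun y => ¬ y ≠ 0)).sum = 0 := by
      refine Multiset.sum_eq_zero ?_
      intro y hy
      rw [Multiset.mem_filter] at hy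
      simpa using hy.2
    rw [hz, add_zero]
  have hnonneg : ∀ y ∈ m', 0 ≤ y := fun y hy => hS (hm'mem y hy).1
  have hyle : ∀ y ∈ m', y ≤ x := by
    intro y hy
    rw [← hsum']
    exact Multiset.single_le_sum hnonneg y hy
  have hmemF : ∀ y ∈ m', y ∈ S ∩ Set.Ioc 0 M := by
    intro y hy
    obtain ⟨hyS, hy0⟩ := hm'mem y hy
    exact ⟨hyS, lt_of_le_of_ne (hS hyS) (Ne.symm hy0), (hyle y hy).trans hxM⟩
  have hcard : m'.card ≤ K := by
    have h1 : (m'.card : ℝ) * σ ≤ x := by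
      have := Multiset.card_nsmul_le_sum (fun y hy => hσ y (hmemF y hy))
      rw [hsum'] at this
      simpa [nsmul_eq_mul] using this
    have h2 : (m'.card : ℝ) ≤ M / σ := by
      rw [le_div_iff₀ hσ0]
      exact h1.trans hxM
    exact_mod_cast h2.trans (Nat.le_ceil _)
  have := sum_mem_iterAdd m' (fun y hy => (hmemF y hy))
  rw [hsum'] at this
  exact iterAdd_mono hcard this






variable {R : Type*} [CommRing R]

/-- Package a `DBBSupp` function as a Hahn series. -/
noncomputable def toH (f : ℝ → R) (hf : DBBSupp f) : HahnSeries ℝ R :=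
  ⟨f, isPWO_of_discrete hf.1 hf.2⟩

@[simp] lemma toH_coeff (f : ℝ → R) (hf : DBBSupp f) : (toH f hf).coeff = f := rfl

lemma cauchy_eq_mul_coeff (f g : ℝ → R) (hf : DBBSupp f) (hg : DBBSupp g) (m : ℝ) :
    cauchy f g m = (toH f hf * toH g hg).coeff m := by
  classical
  rw [HahnSeries.coeff_mul]
  set s := (Finset.antidiagonal (toH f hf).isPWO_support (toH g hg).isPWO_support m) with hs
  have hsupp : Function.support (fun p => f p * g (m - p)) ⊆ ↑(s.image Prod.fst) := by
    intro p hp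
    have hfp : f p ≠ 0 := fun h => hp (by simp [h])
    have hgp : g (m - p) ≠ 0 := fun h => hp (by simp [h])
    have : (p, m - p) ∈ s := by
      rw [hs, Finset.mem_addAntidiagonal]
      exact ⟨hfp, hgp, by ring⟩
    exact Finset.mem_coe.2 (Finset.mem_image.2 ⟨_, this, rfl⟩)
  rw [cauchy, finsum_eq_finset_sum_of_support_subset _ hsupp]
  rw [Finset.sum_image (fun x hx y hy hxy => ?_)]
  · refine Finset.sum_congr rfl fun ij hij => ?_
    rw [Finset.mem_addAntidiagonal] at hij
    have : m - ij.1 = ij.2 := by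
      have := hij.2.2; linarith
    rw [this]; rfl
  · replace hx : x ∈ s := hx; replace hy : y ∈ s := hy; rw [Finset.mem_addAntidiagonal] at hx hy
    have : x.2 = y.2 := by
      have h1 := hx.2.2; have h2 := hy.2.2
      rw [hxy] at h1; linarith
    exact Prod.ext hxy this

lemma coeff_zero_mul {x y : HahnSeries ℝ R} (hx : x.support ⊆ Set.Ici 0)
    (hy : y.support ⊆ Set.Ici 0) : (x * y).coeff 0 = x.coeff 0 * y.coeff 0 := by
  classical
  rw [HahnSeries.coeff_mul]
  by_cases h0 : (0:ℝ) ∈ x.support ∧ (0:ℝ) ∈ y.support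
  · have : Finset.antidiagonal x.isPWO_support y.isPWO_support 0 = {((0:ℝ), (0:ℝ))} := by
      refine Finset.ext fun ij => ?_
      rw [Finset.mem_addAntidiagonal, Finset.mem_singleton]
      constructor
      · rintro ⟨h1, h2, h3⟩
        have i1 : (0:ℝ) ≤ ij.1 := hx h1
        have i2 : (0:ℝ) ≤ ij.2 := hy h2
        have : ij.1 = 0 := by linarith
        have : ij.2 = 0 := by linarith
        exact Prod.ext ‹ij.1 = 0› ‹ij.2 = 0›
      · rintro rfl
        exact ⟨h0.1, h0.2, add_zero 0⟩
    rw [this, Finset.sum_singleton]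
  · rw [not_and_or] at h0
    have hz : x.coeff 0 * y.coeff 0 = 0 := by
      rcases h0 with h | h
      · rw [of_not_not (fun hc => h (HahnSeries.mem_support _ _ |>.2 hc)), zero_mul]
      · rw [of_not_not (fun hc => h (HahnSeries.mem_support _ _ |>.2 hc)), mul_zero]
    rw [hz]
    refine Finset.sum_eq_zero fun ij hij => ?_
    rw [Finset.mem_addAntidiagonal] at hij
    exfalso
    have i1 : (0:ℝ) ≤ ij.1 := hx hij.1
    have i2 : (0:ℝ) ≤ ij.2 := hy hij.2.1
    have e1 : ij.1 = 0 := by have := hij.2.2; linarith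
    have e2 : ij.2 = 0 := by have := hij.2.2; linarith
    rcases h0 with h | h
    · exact h (e1 ▸ hij.1)
    · exact h (e2 ▸ hij.2.1)

/-- The subring of Hahn series with support in a fixed nonnegative submonoid. -/
def suppSubring (P : AddSubmonoid ℝ) : Subring (HahnSeries ℝ R) where
  carrier := {x | x.support ⊆ (P : Set ℝ)}
  zero_mem' := by simp [HahnSeries.support_zero]
  one_mem' := by
    intro a ha
    rw [HahnSeries.mem_support, HahnSeries.coeff_one] at ha
    have : a = 0 := by by_contra h; simp [h] at ha
    rw [this]; exact P.zero_mem
  add_mem' hx hy := (HahnSeries.support_add_subset _ _).trans (by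
    intro a ha; rcases ha with h | h
    · exact hx h
    · exact hy h)
  neg_mem' hx := by
    intro a ha
    rw [HahnSeries.mem_support, HahnSeries.coeff_neg] at ha
    exact hx (HahnSeries.mem_support _ _ |>.2 (by simpa using ha))
  mul_mem' hx hy := by
    intro a ha
    obtain ⟨i, hi, j, hj, rfl⟩ := HahnSeries.support_mul_subset ha
    exact P.add_mem (hx hi) (hy hj)

/-- Evaluation of the lowest coefficient as a ring homomorphism. -/
def ev0 (P : AddSubmonoid ℝ) (hP : (P : Set ℝ) ⊆ Set.Ici 0) :
    suppSubring (R := R) P →+* R where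
  toFun x := (x : HahnSeries ℝ R).coeff 0
  map_one' := by simp [HahnSeries.coeff_one]
  map_zero' := by simp
  map_add' x y := by simp [HahnSeries.coeff_add]
  map_mul' x y := coeff_zero_mul (x.2.trans hP) (y.2.trans hP)




variable {R : Type*} [CommRing R]

lemma mem_suppSubring {P : AddSubmonoid ℝ} {x : HahnSeries ℝ R} :
    x ∈ suppSubring (R := R) P ↔ x.support ⊆ (P : Set ℝ) := Iff.rfl

lemma support_pow_ge {u : HahnSeries ℝ R} {σ : ℝ} (hu : u.support ⊆ Set.Ici σ) :
    ∀ k : ℕ, (u ^ k).support ⊆ Set.Ici ((k : ℝ) * σ)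
  | 0 => by
    intro a ha
    rw [pow_zero, HahnSeries.mem_support, HahnSeries.coeff_one] at ha
    have ha0 : a = 0 := by by_contra h; simp [h] at ha
    subst ha0
    simp
  | (k+1) => by
    intro a ha
    rw [pow_succ] at ha
    obtain ⟨i, hi, j, hj, rfl⟩ := HahnSeries.support_mul_subset ha
    have h1 : (k : ℝ) * σ ≤ i := support_pow_ge hu k hi
    have h2 : σ ≤ j := hu hj
    have : ((k+1 : ℕ) : ℝ) * σ = (k : ℝ) * σ + σ := by push_cast; ring
    rw [Set.mem_Ici, this]
    exact add_le_add h1 h2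

/-- The summable family of powers of an element supported in `[σ, ∞) ∩ P`. -/
noncomputable def powFamily {P : AddSubmonoid ℝ} (hPwo : (P : Set ℝ).IsPWO)
    {u : HahnSeries ℝ R} {σ : ℝ} (hσ : 0 < σ) (hu : u.support ⊆ Set.Ici σ)
    (huP : u ∈ suppSubring (R := R) P) : HahnSeries.SummableFamily ℝ R ℕ where
  toFun k := u ^ k
  isPWO_iUnion_support' := by
    refine hPwo.mono (Set.iUnion_subset fun k => ?_)
    exact mem_suppSubring.1 (pow_mem huP k)
  finite_co_support' g := by
    refine (Set.finite_Iic (⌈g / σ⌉₊ : ℕ)).subset ?_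
    intro k hk
    have hg : g ∈ (u ^ k).support := hk
    have h1 : (k : ℝ) * σ ≤ g := support_pow_ge hu k hg
    have h2 : (k : ℝ) ≤ g / σ := by rw [le_div_iff₀ hσ]; exact h1
    exact Set.mem_Iic.2 (by exact_mod_cast h2.trans (Nat.le_ceil _))

@[simp] lemma powFamily_toFun {P : AddSubmonoid ℝ} (hPwo : (P : Set ℝ).IsPWO)
    {u : HahnSeries ℝ R} {σ : ℝ} (hσ : 0 < σ) (hu : u.support ⊆ Set.Ici σ)
    (huP : u ∈ suppSubring (R := R) P) (k : ℕ) :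
    powFamily hPwo hσ hu huP k = u ^ k := rfl

open HahnSeries.SummableFamily in
lemma embDomain_succ_smul_powFamily {P : AddSubmonoid ℝ} (hPwo : (P : Set ℝ).IsPWO)
    {u : HahnSeries ℝ R} {σ : ℝ} (hσ : 0 < σ) (hu : u.support ⊆ Set.Ici σ)
    (huP : u ∈ suppSubring (R := R) P) :
    (u • powFamily hPwo hσ hu huP).embDomain ⟨Nat.succ, Nat.succ_injective⟩ =
      powFamily hPwo hσ hu huP - ofFinsupp (Finsupp.single 0 1) := by
  apply HahnSeries.SummableFamily.ext
  rintro (_ | n)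
  · rw [embDomain_notin_range, HahnSeries.SummableFamily.sub_apply, powFamily_toFun, pow_zero, coe_ofFinsupp,
      Finsupp.single_eq_same, sub_self]
    rw [Set.mem_range, not_exists]
    exact fun m => Nat.succ_ne_zero m
  · refine Eq.trans (embDomain_image _ ⟨Nat.succ, Nat.succ_injective⟩) ?_
    rw [HahnSeries.SummableFamily.smul_apply, powFamily_toFun, HahnSeries.SummableFamily.sub_apply, powFamily_toFun, coe_ofFinsupp, pow_succ',
      Finsupp.single_eq_of_ne' (Nat.zero_ne_add_one n), sub_zero,
      HahnSeries.of_symm_smul_of_eq_mul]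

lemma one_sub_mul_hsum_powFamily {P : AddSubmonoid ℝ} (hPwo : (P : Set ℝ).IsPWO)
    {u : HahnSeries ℝ R} {σ : ℝ} (hσ : 0 < σ) (hu : u.support ⊆ Set.Ici σ)
    (huP : u ∈ suppSubring (R := R) P) :
    (1 - u) * (powFamily hPwo hσ hu huP).hsum = 1 := by
  rw [← HahnSeries.SummableFamily.hsum_smul, sub_smul 1 u (powFamily hPwo hσ hu huP), one_smul,
    HahnSeries.SummableFamily.hsum_sub,
    ← HahnSeries.SummableFamily.hsum_embDomain (u • powFamily hPwo hσ hu huP)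
      ⟨Nat.succ, Nat.succ_injective⟩,
    embDomain_succ_smul_powFamily]
  simp

/-- Inversion in the subring of Hahn series supported in a discrete nonnegative submonoid. -/
lemma exists_inverse (P : AddSubmonoid ℝ) (hP : (P : Set ℝ) ⊆ Set.Ici 0)
    (hPfin : ∀ M : ℝ, ((P : Set ℝ) ∩ Set.Iic M).Finite)
    {x : HahnSeries ℝ R} (hx : x ∈ suppSubring (R := R) P)
    (hxu : IsUnit (x.coeff 0)) :
    ∃ y : HahnSeries ℝ R, y ∈ suppSubring (R := R) P ∧ x * y = 1 := by
  classical
  have hPwo : (P : Set ℝ).IsPWO :=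
    isPWO_of_discrete (discrete_of_finite_bounded hPfin) ⟨0, fun p hp => hP hp⟩
  -- a positive lower bound for the nonzero elements of P
  obtain ⟨σ, hσ0, hσ⟩ : ∃ σ : ℝ, 0 < σ ∧ ∀ p ∈ (P : Set ℝ), p ≠ 0 → σ ≤ p := by
    have hF : ((P : Set ℝ) ∩ Set.Ioc 0 1).Finite := (hPfin 1).subset fun y hy => ⟨hy.1, hy.2.2⟩
    rcases ((P : Set ℝ) ∩ Set.Ioc 0 1).eq_empty_or_nonempty with he | hne
    · refine ⟨1, one_pos, fun p hp hp0 => ?_⟩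
      by_contra hlt
      push_neg at hlt
      have hp' : p ∈ (P : Set ℝ) ∩ Set.Ioc 0 1 :=
        ⟨hp, lt_of_le_of_ne (hP hp) (Ne.symm hp0), le_of_lt hlt⟩
      rw [he] at hp'; exact hp'
    · refine ⟨hF.toFinset.min' (by simpa using hne), ?_, fun p hp hp0 => ?_⟩
      · have := hF.toFinset.min'_mem (by simpa using hne)
        rw [Set.Finite.mem_toFinset] at this
        exact this.2.1
      · rcases le_or_gt p 1 with h1 | h1
        · exact hF.toFinset.min'_le p (hF.mem_toFinset.2
            ⟨hp, lt_of_le_of_ne (hP hp) (Ne.symm hp0), h1⟩)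
        · have := hF.toFinset.min'_mem (by simpa using hne)
          rw [Set.Finite.mem_toFinset] at this
          exact le_trans this.2.2 (le_of_lt h1)
  obtain ⟨c, hc⟩ : ∃ c : R, c * x.coeff 0 = 1 ∧ x.coeff 0 * c = 1 := by
    obtain ⟨w, hw⟩ := hxu
    exact ⟨(w⁻¹ : Rˣ), by rw [← hw]; exact w.inv_mul, by rw [← hw]; exact w.mul_inv⟩
  set C : HahnSeries ℝ R := HahnSeries.single (0:ℝ) c with hC
  have hCmul : ∀ z : HahnSeries ℝ R, ∀ a : ℝ, (C * z).coeff a = c * z.coeff a := by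
    intro z a; rw [hC]; exact HahnSeries.coeff_single_zero_mul
  set u : HahnSeries ℝ R := 1 - C * x with hudef
  have hcu : C * x = 1 - u := by rw [hudef]; ring
  have hu0 : u.coeff 0 = 0 := by
    rw [hudef, HahnSeries.coeff_sub, HahnSeries.coeff_one, hCmul x 0]
    simp [hc.1]
  have husupp : u.support ⊆ (P : Set ℝ) := by
    intro a ha
    rw [HahnSeries.mem_support, hudef, HahnSeries.coeff_sub, HahnSeries.coeff_one,
      hCmul x a] at ha
    by_cases h0 : a = 0
    · subst h0; exact P.zero_mem
    · rw [if_neg h0] at ha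
      have : x.coeff a ≠ 0 := fun h => ha (by simp [h])
      exact hx this
  have huP : u ∈ suppSubring (R := R) P := husupp
  have huIci : u.support ⊆ Set.Ici σ := by
    intro a ha
    have haP := husupp ha
    have ha0 : a ≠ 0 := fun h => (HahnSeries.mem_support _ _).1 ha (h ▸ hu0)
    exact hσ a haP ha0
  refine ⟨C * (powFamily hPwo hσ0 huIci huP).hsum, ?_, ?_⟩
  · intro a ha
    have ha' : (powFamily hPwo hσ0 huIci huP).hsum.coeff a ≠ 0 := by
      intro h
      apply (HahnSeries.mem_support _ _).1 ha
      rw [hCmul, h, mul_zero]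
    have hmem := HahnSeries.SummableFamily.support_hsum_subset ha'
    obtain ⟨k, hk⟩ := Set.mem_iUnion.1 hmem
    exact mem_suppSubring.1 (pow_mem huP k) hk
  · have h1 : (1 - u) * (powFamily hPwo hσ0 huIci huP).hsum = 1 :=
      one_sub_mul_hsum_powFamily hPwo hσ0 huIci huP
    rw [← hcu] at h1
    calc x * (C * (powFamily hPwo hσ0 huIci huP).hsum)
        = (C * x) * (powFamily hPwo hσ0 huIci huP).hsum := by ring
      _ = 1 := h1


end FMI
namespace FMI
variable {R : Type*} [CommRing R]
lemma toH_congr {f f' : ℝ → R} (h : f = f') (hf : DBBSupp f) (hf' : DBBSupp f') :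
    toH f hf = toH f' hf' := by subst h; rfl
end FMI


open Classical in
/-- a symmetric family (g_{ab}) in R⟪X⟫ supported in [-v,∞) whose matrix
of lowest-order coefficients is invertible has a unique symmetric inverse family
(g^{ab}) in R⟪X⟫ supported in [v,∞) with g_{ai}g^{ib} = δ_a^b, and the lowest-order
coefficients of the inverse family form the inverse matrix of ((g_{ab})(-v)). -/
theorem formal_metric_inverse {R : Type*} [CommRing R] (n : ℕ) (hn : 2 ≤ n)
    (v : ℝ) (g : Fin n → Fin n → (ℝ → R))
    (hsym : ∀ a b, g a b = g b a)
    (hdbb : ∀ a b, DBBSupp (g a b))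
    (hsupp : ∀ a b, Function.support (g a b) ⊆ Set.Ici (-v))
    (hunit : IsUnit (Matrix.of (fun a b => g a b (-v)) : Matrix (Fin n) (Fin n) R)) :
    (∃! ginv : Fin n → Fin n → (ℝ → R),
      (∀ a b, ginv a b = ginv b a) ∧
      (∀ a b, DBBSupp (ginv a b)) ∧
      (∀ a b, Function.support (ginv a b) ⊆ Set.Ici v) ∧
      (∀ a b, (fun m => ∑ i : Fin n, cauchy (g a i) (ginv i b) m)
        = fun m => if a = b then oneX m else 0)) ∧
    (∀ ginv : Fin n → Fin n → (ℝ → R),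
      (∀ a b, ginv a b = ginv b a) →
      (∀ a b, DBBSupp (ginv a b)) →
      (∀ a b, Function.support (ginv a b) ⊆ Set.Ici v) →
      (∀ a b, (fun m => ∑ i : Fin n, cauchy (g a i) (ginv i b) m)
        = fun m => if a = b then oneX m else 0) →
      (Matrix.of (fun a b => g a b (-v)) : Matrix (Fin n) (Fin n) R)
        * Matrix.of (fun a b => ginv a b v) = 1) := by
  classical
  constructor
  · -- existence and uniqueness
    set S : Set ℝ := insert 0 (⋃ a : Fin n, ⋃ b : Fin n,
      (fun x => v + x) '' Function.support (g a b)) with hSdef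
    have hS0 : S ⊆ Set.Ici 0 := by
      rintro x hx
      rcases Set.mem_insert_iff.1 hx with rfl | hx
      · exact Set.self_mem_Ici
      · obtain ⟨a, hx⟩ := Set.mem_iUnion.1 hx
        obtain ⟨b, hx⟩ := Set.mem_iUnion.1 hx
        obtain ⟨y, hy, rfl⟩ := hx
        have : -v ≤ y := hsupp a b hy
        simp only [Set.mem_Ici]
        linarith
    have hSfin : ∀ M : ℝ, (S ∩ Set.Iic M).Finite := by
      intro M
      have hsub : S ∩ Set.Iic M ⊆ insert 0 (⋃ a : Fin n, ⋃ b : Fin n,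
          (fun x => v + x) '' (Function.support (g a b) ∩ Set.Iic (M - v))) := by
        rintro x ⟨hx, hxM⟩
        rcases Set.mem_insert_iff.1 hx with rfl | hx
        · exact Set.mem_insert _ _
        · obtain ⟨a, hx⟩ := Set.mem_iUnion.1 hx
          obtain ⟨b, hx⟩ := Set.mem_iUnion.1 hx
          obtain ⟨y, hy, rfl⟩ := hx
          refine Set.mem_insert_iff.2 (Or.inr (Set.mem_iUnion.2 ⟨a, Set.mem_iUnion.2 ⟨b, ?_⟩⟩))
          refine ⟨y, ⟨hy, ?_⟩, rfl⟩
          simp only [Set.mem_Iic] at hxM ⊢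
          linarith
      refine Set.Finite.subset (Set.Finite.insert 0 ?_) hsub
      exact Set.finite_iUnion fun a => Set.finite_iUnion fun b =>
        (FMI.finite_bounded_of_discrete (hdbb a b).1 (hdbb a b).2 (M - v)).image _
    set P : AddSubmonoid ℝ := AddSubmonoid.closure S with hPdef
    have hPsub : (P : Set ℝ) ⊆ Set.Ici 0 := by
      have h : P ≤ AddSubmonoid.nonneg ℝ :=
        AddSubmonoid.closure_le.2 (fun x hx => AddSubmonoid.mem_nonneg.2 (hS0 hx))
      exact fun x hx => AddSubmonoid.mem_nonneg.1 (h hx)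
    have hPfin : ∀ M : ℝ, ((P : Set ℝ) ∩ Set.Iic M).Finite :=
      FMI.closure_finite_bounded hS0 hSfin
    set X : HahnSeries ℝ R := HahnSeries.single v (1 : R) with hXdef
    set Hm : Matrix (Fin n) (Fin n) (HahnSeries ℝ R) :=
      Matrix.of (fun a b => X * FMI.toH (g a b) (hdbb a b)) with hHmdef
    have hHmab : ∀ a b, Hm a b = X * FMI.toH (g a b) (hdbb a b) := fun a b => rfl
    have hHmem : ∀ a b, Hm a b ∈ FMI.suppSubring (R := R) P := by
      intro a b t ht
      rw [hHmab] at ht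
      obtain ⟨i, hi, j, hj, rfl⟩ := HahnSeries.support_mul_subset ht
      have hiv : i = v := HahnSeries.support_single_subset hi
      subst hiv
      refine AddSubmonoid.subset_closure ?_
      rw [hSdef]
      refine Set.mem_insert_iff.2 (Or.inr ?_)
      exact Set.mem_iUnion.2 ⟨a, Set.mem_iUnion.2 ⟨b, Set.mem_image_of_mem _ hj⟩⟩
    have hH0 : ∀ a b, (Hm a b).coeff 0 = g a b (-v) := by
      intro a b
      have h := HahnSeries.coeff_single_mul_add (r := (1 : R))
        (x := FMI.toH (g a b) (hdbb a b)) (a := -v) (b := v)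
      rw [neg_add_cancel] at h
      rw [hHmab]
      simpa using h
    set Hm' : Matrix (Fin n) (Fin n) (FMI.suppSubring (R := R) P) :=
      Matrix.of (fun a b => (⟨Hm a b, hHmem a b⟩ : FMI.suppSubring (R := R) P)) with hHm'def
    have hmap : Hm'.map (FMI.suppSubring (R := R) P).subtype = Hm := by
      ext a b; rfl
    have hdetsub : Hm.det = (FMI.suppSubring (R := R) P).subtype Hm'.det := by
      rw [RingHom.map_det, RingHom.mapMatrix_apply, hmap]
    have hdetmem : Hm.det ∈ FMI.suppSubring (R := R) P := by
      rw [hdetsub]; exact Hm'.det.2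
    have hdet0 : (Hm.det).coeff 0
        = (Matrix.of (fun a b => g a b (-v)) : Matrix (Fin n) (Fin n) R).det := by
      have h2 := RingHom.map_det (FMI.ev0 (R := R) P hPsub) Hm'
      have h3 : Hm'.map (FMI.ev0 (R := R) P hPsub) = Matrix.of (fun a b => g a b (-v)) := by
        ext a b
        exact hH0 a b
      rw [hdetsub]
      show FMI.ev0 (R := R) P hPsub Hm'.det = _
      rw [h2, RingHom.mapMatrix_apply, h3]
    have hdu : IsUnit ((Hm.det).coeff 0) := by
      rw [hdet0]
      exact (Matrix.isUnit_iff_isUnit_det _).1 hunit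
    obtain ⟨e, heP, hde⟩ := FMI.exists_inverse P hPsub hPfin hdetmem hdu
    set K : Matrix (Fin n) (Fin n) (HahnSeries ℝ R) :=
      Matrix.of (fun a b => e * Hm.adjugate a b) with hKdef
    have hKab : ∀ a b, K a b = e * Hm.adjugate a b := fun a b => rfl
    have hHK : Hm * K = 1 := by
      refine Matrix.ext fun a b => ?_
      rw [Matrix.mul_apply]
      have hterm : ∀ i, Hm a i * K i b = e * (Hm a i * Hm.adjugate i b) := by
        intro i; rw [hKab]; ring
      rw [Finset.sum_congr rfl fun i _ => hterm i, ← Finset.mul_sum, ← Matrix.mul_apply,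
        Matrix.mul_adjugate]
      by_cases hab : a = b
      · subst hab
        rw [Matrix.smul_apply, Matrix.one_apply_eq, smul_eq_mul,
          mul_one, mul_comm e Hm.det, hde]
      · rw [Matrix.smul_apply, Matrix.one_apply_ne hab,
          smul_eq_mul, mul_zero, mul_zero]
    have hadjmem : ∀ a b, Hm.adjugate a b ∈ FMI.suppSubring (R := R) P := by
      intro a b
      have h1 : Hm.adjugate = (Hm'.adjugate).map (FMI.suppSubring (R := R) P).subtype := by
        rw [← RingHom.mapMatrix_apply, RingHom.map_adjugate, RingHom.mapMatrix_apply, hmap]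
      rw [h1]
      exact (Hm'.adjugate a b).2
    have hKmem : ∀ a b, K a b ∈ FMI.suppSubring (R := R) P := by
      intro a b
      rw [hKab]
      exact mul_mem heP (hadjmem a b)
    have hHsymm : Hm.transpose = Hm := by
      ext a b
      rw [Matrix.transpose_apply, hHmab, hHmab]
      rw [FMI.toH_congr (hsym b a) (hdbb b a) (hdbb a b)]
    have hadjsym : ∀ a b, Hm.adjugate a b = Hm.adjugate b a := by
      intro a b
      have h1 : Matrix.transpose (Hm.adjugate) = Hm.adjugate := by
        rw [Matrix.adjugate_transpose, hHsymm]
      conv_lhs => rw [← h1]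
      rfl
    have hKsym : ∀ a b, K a b = K b a := by
      intro a b
      rw [hKab, hKab, hadjsym]
    set ginv : Fin n → Fin n → (ℝ → R) := fun a b m => (X * K a b).coeff m with hginvdef
    have hgsupport : ∀ a b, Function.support (ginv a b) ⊆ (fun p => v + p) '' (P : Set ℝ) := by
      intro a b t ht
      have ht' : t ∈ (X * K a b).support := ht
      obtain ⟨i, hi, j, hj, rfl⟩ := HahnSeries.support_mul_subset ht'
      have hiv : i = v := HahnSeries.support_single_subset hi
      subst hiv
      exact ⟨j, hKmem a b hj, rfl⟩
    have hPvfin : ∀ M : ℝ, (((fun p => v + p) '' (P : Set ℝ)) ∩ Set.Iic M).Finite := by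
      intro M
      have hsub : ((fun p => v + p) '' (P : Set ℝ)) ∩ Set.Iic M ⊆
          (fun p => v + p) '' ((P : Set ℝ) ∩ Set.Iic (M - v)) := by
        rintro x ⟨⟨p, hp, rfl⟩, hxM⟩
        refine ⟨p, ⟨hp, ?_⟩, rfl⟩
        simp only [Set.mem_Iic] at hxM ⊢
        linarith
      exact ((hPfin (M - v)).image _).subset hsub
    have hginvIci : ∀ a b, Function.support (ginv a b) ⊆ Set.Ici v := by
      intro a b t ht
      obtain ⟨p, hp, rfl⟩ := hgsupport a b ht
      have h0 : (0:ℝ) ≤ p := hPsub hp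
      simp only [Set.mem_Ici]
      linarith
    have hginvdbb : ∀ a b, DBBSupp (ginv a b) := by
      intro a b
      exact ⟨FMI.DiscreteSubset.mono (FMI.discrete_of_finite_bounded hPvfin) (hgsupport a b),
        ⟨v, fun t ht => hginvIci a b ht⟩⟩
    have htoH : ∀ a b, FMI.toH (ginv a b) (hginvdbb a b) = X * K a b := by
      intro a b
      exact HahnSeries.coeff_injective (funext fun m => rfl)
    have hginvsym : ∀ a b, ginv a b = ginv b a := by
      intro a b
      funext m
      show (X * K a b).coeff m = (X * K b a).coeff m
      rw [hKsym]
    have hginveq : ∀ a b, (fun m => ∑ i : Fin n, cauchy (g a i) (ginv i b) m)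
        = fun m => if a = b then oneX m else 0 := by
      intro a b
      funext m
      have step1 : ∀ i : Fin n, cauchy (g a i) (ginv i b) m = (Hm a i * K i b).coeff m := by
        intro i
        rw [FMI.cauchy_eq_mul_coeff _ _ (hdbb a i) (hginvdbb i b), htoH]
        congr 1
        rw [hHmab]
        ring
      rw [Finset.sum_congr rfl (fun i _ => step1 i)]
      have step2 : ∑ i : Fin n, (Hm a i * K i b).coeff m = ((Hm * K) a b).coeff m := by
        rw [Matrix.mul_apply]
        exact (map_sum (HahnSeries.coeff.addMonoidHom m)
          (fun i => Hm a i * K i b) Finset.univ).symm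
      rw [step2, hHK]
      by_cases hab : a = b
      · subst hab
        simp [Matrix.one_apply, HahnSeries.coeff_one, oneX]
      · simp [Matrix.one_apply, hab]
    refine ⟨ginv, ⟨hginvsym, hginvdbb, hginvIci, hginveq⟩, ?_⟩
    -- uniqueness
    rintro y ⟨hysym, hydbb, hysupp, hyeq⟩
    have hXinv : X * HahnSeries.single (-v) (1 : R) = 1 := by
      rw [hXdef, HahnSeries.single_mul_single, add_neg_cancel, one_mul,
        HahnSeries.single_zero_one]
    set K' : Matrix (Fin n) (Fin n) (HahnSeries ℝ R) :=
      Matrix.of (fun i b => HahnSeries.single (-v) (1:R) * FMI.toH (y i b) (hydbb i b))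
      with hK'def
    have hK'ab : ∀ i b, K' i b
        = HahnSeries.single (-v) (1:R) * FMI.toH (y i b) (hydbb i b) := fun _ _ => rfl
    have hHK' : Hm * K' = 1 := by
      refine Matrix.ext fun a b => HahnSeries.coeff_injective (funext fun m => ?_)
      rw [Matrix.mul_apply]
      have e1 : ∀ i : Fin n, Hm a i * K' i b
          = FMI.toH (g a i) (hdbb a i) * FMI.toH (y i b) (hydbb i b) := by
        intro i
        rw [hHmab, hK'ab]
        calc X * FMI.toH (g a i) (hdbb a i)
              * (HahnSeries.single (-v) 1 * FMI.toH (y i b) (hydbb i b))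
            = (X * HahnSeries.single (-v) 1)
              * (FMI.toH (g a i) (hdbb a i) * FMI.toH (y i b) (hydbb i b)) := by ring
          _ = FMI.toH (g a i) (hdbb a i) * FMI.toH (y i b) (hydbb i b) := by
              rw [hXinv, one_mul]
      have e2 : (∑ i : Fin n, Hm a i * K' i b).coeff m
          = ∑ i : Fin n, (Hm a i * K' i b).coeff m :=
        map_sum (HahnSeries.coeff.addMonoidHom m) (fun i => Hm a i * K' i b) Finset.univ
      rw [e2, Finset.sum_congr rfl (fun i _ => by rw [e1 i])]
      have e3 : ∀ i : Fin n, (FMI.toH (g a i) (hdbb a i) * FMI.toH (y i b) (hydbb i b)).coeff m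
          = cauchy (g a i) (y i b) m := fun i =>
        (FMI.cauchy_eq_mul_coeff _ _ (hdbb a i) (hydbb i b) m).symm
      rw [Finset.sum_congr rfl (fun i _ => e3 i)]
      have e4 : (∑ i : Fin n, cauchy (g a i) (y i b) m) = if a = b then oneX m else 0 :=
        congrFun (hyeq a b) m
      rw [e4]
      by_cases hab : a = b
      · subst hab
        simp [Matrix.one_apply, HahnSeries.coeff_one, oneX]
      · simp [Matrix.one_apply, hab]
    have hKHK : K * Hm = 1 := mul_eq_one_comm.1 hHK
    have hK'K : K' = K := by
      calc K' = 1 * K' := (one_mul K').symm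
        _ = K * Hm * K' := by rw [hKHK]
        _ = K * (Hm * K') := by rw [Matrix.mul_assoc]
        _ = K := by rw [hHK', mul_one]
    funext a b m
    have h5 : FMI.toH (y a b) (hydbb a b) = X * K' a b := by
      rw [hK'ab, ← mul_assoc, hXinv, one_mul]
    have h6 : y a b m = (X * K' a b).coeff m := by
      rw [← h5]; rfl
    rw [h6, hK'K]
  · -- lowest-order coefficients form the inverse matrix
    intro ginv _ _ hgsupp2 hgeq
    ext a b
    have h : (∑ i : Fin n, cauchy (g a i) (ginv i b) 0) = if a = b then oneX 0 else 0 :=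
      congrFun (hgeq a b) 0
    have hterm : ∀ i : Fin n, cauchy (g a i) (ginv i b) 0 = g a i (-v) * ginv i b v := by
      intro i
      have hs : ∀ p : ℝ, p ≠ -v → g a i p * ginv i b (0 - p) = 0 := by
        intro p hp
        by_cases h1 : g a i p = 0
        · rw [h1, zero_mul]
        · by_cases h2 : ginv i b (0 - p) = 0
          · rw [h2, mul_zero]
          · exfalso
            have hp1 : -v ≤ p := hsupp a i h1
            have hp2 : v ≤ 0 - p := hgsupp2 i b h2
            exact hp (by linarith)
      have hfs := finsum_eq_single (fun p => g a i p * ginv i b (0 - p)) (-v) hs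
      show (∑ᶠ p : ℝ, g a i p * ginv i b (0 - p)) = _
      rw [hfs]
      simp only [zero_sub, neg_neg]
    rw [Matrix.mul_apply, Matrix.one_apply]
    simp only [Matrix.of_apply]
    rw [Finset.sum_congr rfl (fun i _ => (hterm i).symm), h]
    by_cases hab : a = b
    · simp [hab, oneX]
    · simp [hab]
end
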